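/- The function F₂(x₁,v₁,a₁,x₂,v₂,a₂) = x₁ + x₂ + 2v₁v₂(v₁−v₂)/(a₂v₁ − a₁v₂) is a common first integral of the vector fields Ỹ₁ = 2v₁∂/∂a₁ + 2v₂∂/∂a₂, Ỹ₂ = Σᵢ(vᵢ∂/∂vᵢ + 2aᵢ∂/∂aᵢ), and Ỹ₃ = Σᵢ(vᵢ∂/∂xᵢ + aᵢ∂/∂vᵢ + (3/2)(aᵢ²/vᵢ)∂/∂aᵢ) on the open set where v₁v₂(a₂v₁ − a₁v₂) ≠ 0. -/

import Mathlib

set_option maxHeartbeats 1000000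

/-- `F₂ = x₁ + x₂ + 2v₁v₂(v₁−v₂)/(a₂v₁ − a₁v₂)` is a common first integral
of `Ỹ₁ = 2v₁∂_{a₁} + 2v₂∂_{a₂}`, `Ỹ₂`, `Ỹ₃` on `{v₁v₂(a₂v₁ − a₁v₂) ≠ 0}`.
Coordinates on `ℝ⁶`: `(p 0, …, p 5) = (x₁, v₁, a₁, x₂, v₂, a₂)`. -/
theorem schwarzian_diagonal_first_integral_F2
    (F₂ : (Fin 6 → ℝ) → ℝ)
    (hF₂ : ∀ p, F₂ p = p 0 + p 3 +
      2 * p 1 * p 4 * (p 1 - p 4) / (p 5 * p 1 - p 2 * p 4)) :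
    ∀ p : Fin 6 → ℝ, p 1 * p 4 * (p 5 * p 1 - p 2 * p 4) ≠ 0 →
      fderiv ℝ F₂ p ![0, 0, 2 * p 1, 0, 0, 2 * p 4] = 0 ∧
      fderiv ℝ F₂ p ![0, p 1, 2 * p 2, 0, p 4, 2 * p 5] = 0 ∧
      fderiv ℝ F₂ p
        ![p 1, p 2, (3/2) * (p 2) ^ 2 / p 1, p 4, p 5, (3/2) * (p 5) ^ 2 / p 4] = 0 := by
  have hfe : F₂ = fun p : Fin 6 → ℝ => p 0 + p 3 +
      2 * p 1 * p 4 * (p 1 - p 4) / (p 5 * p 1 - p 2 * p 4) := funext hF₂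
  subst hfe
  intro p hp
  have h1 : p 1 ≠ 0 := fun h => hp (by simp [h])
  have h4 : p 4 ≠ 0 := fun h => hp (by simp [h])
  have hD : p 5 * p 1 - p 2 * p 4 ≠ 0 := fun h => hp (by simp [h])
  set π : Fin 6 → (Fin 6 → ℝ) →L[ℝ] ℝ := fun i => ContinuousLinearMap.proj i with hπ
  have hproj : ∀ i : Fin 6, HasFDerivAt (fun q : Fin 6 → ℝ => q i) (π i) p :=
    fun i => (π i).hasFDerivAt
  have hN : HasFDerivAt (fun q : Fin 6 → ℝ => 2 * q 1 * q 4 * (q 1 - q 4))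
      ((2 * p 1 * p 4) • (π 1 - π 4) + (p 1 - p 4) • (((2:ℝ) * p 1) • π 4 + (p 4) • ((2:ℝ) • π 1))) p := by
    have := (((hproj 1).const_mul (2:ℝ)).mul (hproj 4)).mul ((hproj 1).sub (hproj 4))
    convert this using 1
    all_goals · ext v; simp <;> ring
  have hDf : HasFDerivAt (fun q : Fin 6 → ℝ => q 5 * q 1 - q 2 * q 4)
      ((p 5 • π 1 + p 1 • π 5) - (p 2 • π 4 + p 4 • π 2)) p := by
    have := ((hproj 5).mul (hproj 1)).sub ((hproj 2).mul (hproj 4))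
    convert this using 1
    all_goals · ext v; simp <;> ring
  have hInv : HasFDerivAt (fun q : Fin 6 → ℝ => (q 5 * q 1 - q 2 * q 4)⁻¹)
      ((-((p 5 * p 1 - p 2 * p 4) ^ 2)⁻¹) • ((p 5 • π 1 + p 1 • π 5) - (p 2 • π 4 + p 4 • π 2))) p :=
    (hasDerivAt_inv hD).comp_hasFDerivAt p hDf
  have hQ := hN.mul hInv
  have hF := ((hproj 0).add (hproj 3)).add hQ
  have key : (fun q : Fin 6 → ℝ => q 0 + q 3 +
      2 * q 1 * q 4 * (q 1 - q 4) / (q 5 * q 1 - q 2 * q 4)) =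
      (fun q : Fin 6 → ℝ => q 0 + q 3 +
      2 * q 1 * q 4 * (q 1 - q 4) * (q 5 * q 1 - q 2 * q 4)⁻¹) := by
    funext q; rw [div_eq_mul_inv]
  rw [key, HasFDerivAt.fderiv (f := fun q : Fin 6 → ℝ => q 0 + q 3 +
      2 * q 1 * q 4 * (q 1 - q 4) * (q 5 * q 1 - q 2 * q 4)⁻¹) hF]
  have e5 : ∀ (a b c d e f : ℝ), (![a,b,c,d,e,f] : Fin 6 → ℝ) 5 = f :=
    fun _ _ _ _ _ _ => rfl
  have hD2 : p 1 * p 5 - p 4 * p 2 ≠ 0 := by rw [mul_comm (p 1), mul_comm (p 4)]; exact hD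
  refine ⟨?_, ?_, ?_⟩ <;>
  · simp [π, ContinuousLinearMap.proj, e5]
    try field_simp
    try ring
    try tauto
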